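/- For a k-uniform matroid with rank function f(S) = min(|S|,k) and any marginal probability vector q ∈ [0,1]^n, the maximum over distributions D with marginals q of E_{S~D}[f(S)] equals min(Σ_i q_i, k). -/

import Mathlib

open Finset

/-- Double counting: expected cardinality equals sum of marginals. -/
lemma double_count (n : ℕ) (q : Fin n → ℝ) (D : Finset (Fin n) → ℝ)
    (hm : ∀ i, (∑ S ∈ Finset.univ.filter (fun S : Finset (Fin n) => i ∈ S), D S) = q i) :
    ∑ S : Finset (Fin n), D S * S.card = ∑ i, q i := by
  have h1 : ∀ S : Finset (Fin n), D S * S.card = ∑ i : Fin n, if i ∈ S then D S else 0 := by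
    intro S
    rw [Finset.sum_ite_mem, Finset.univ_inter, Finset.sum_const, nsmul_eq_mul, mul_comm]
  calc ∑ S : Finset (Fin n), D S * S.card
      = ∑ S : Finset (Fin n), ∑ i : Fin n, if i ∈ S then D S else 0 := by
        exact Finset.sum_congr rfl fun S _ => h1 S
    _ = ∑ i : Fin n, ∑ S : Finset (Fin n), if i ∈ S then D S else 0 := Finset.sum_comm
    _ = ∑ i, q i := by
        refine Finset.sum_congr rfl fun i _ => ?_
        rw [← hm i, Finset.sum_filter]

def GoodD (n : ℕ) (q : Fin n → ℝ) (D : Finset (Fin n) → ℝ) : Prop :=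
  (∀ S, 0 ≤ D S) ∧ (∑ S : Finset (Fin n), D S = 1) ∧
  (∀ i, (∑ S ∈ Finset.univ.filter (fun S : Finset (Fin n) => i ∈ S), D S) = q i) ∧
  (∀ S : Finset (Fin n), D S ≠ 0 →
    (S.card : ℝ) < (∑ l, q l) + 1 ∧ (∑ l, q l) < (S.card : ℝ) + 1)

lemma two_point_marginal (n : ℕ) (A B : Finset (Fin n)) (a b : ℝ) (j : Fin n) :
    (∑ S ∈ Finset.univ.filter (fun S : Finset (Fin n) => j ∈ S),
      ((if S = A then a else 0) + (if S = B then b else 0)))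
    = (if j ∈ A then a else 0) + (if j ∈ B then b else 0) := by
  rw [Finset.sum_add_distrib]
  congr 1 <;> simp [Finset.sum_ite_eq', Finset.mem_filter]

lemma base_integral (n : ℕ) (q : Fin n → ℝ) (hint : ∀ j, q j = 0 ∨ q j = 1) :
    ∃ D, GoodD n q D := by
  set S₀ : Finset (Fin n) := Finset.univ.filter (fun l => q l = 1) with hS₀
  have hsum : ∑ l, q l = (S₀.card : ℝ) := by
    have : ∀ l, q l = (if l ∈ S₀ then (1:ℝ) else 0) := by
      intro l
      rcases hint l with h | h <;> simp [hS₀, h]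
    rw [Finset.sum_congr rfl fun l _ => this l, Finset.sum_ite_mem, Finset.univ_inter,
      Finset.sum_const, nsmul_eq_mul, mul_one]
  refine ⟨fun S => if S = S₀ then 1 else 0, fun S => by positivity, by simp, ?_, ?_⟩
  · intro j
    have := two_point_marginal n S₀ S₀ 1 0 j
    simp only [add_zero, if_neg, ite_self] at this ⊢
    rw [show (fun S : Finset (Fin n) => (if S = S₀ then (1:ℝ) else 0)) = fun S =>
      ((if S = S₀ then (1:ℝ) else 0) + (if S = S₀ then 0 else 0)) by funext S; simp]
    rw [two_point_marginal n S₀ S₀ 1 0 j]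
    rcases hint j with h | h <;> simp [hS₀, h]
  · intro S hS
    have : S = S₀ := by by_contra h; simp [h] at hS
    subst this
    rw [hsum]
    constructor <;> linarith

lemma base_one_frac (n : ℕ) (q : Fin n → ℝ) (h0 : ∀ l, 0 ≤ q l) (i : Fin n)
    (hi1 : q i < 1) (hint : ∀ j, j ≠ i → q j = 0 ∨ q j = 1) :
    ∃ D, GoodD n q D := by
  set S₀ : Finset (Fin n) := Finset.univ.filter (fun l => q l = 1) with hS₀
  have hiS₀ : i ∉ S₀ := by simp [hS₀]; intro h; linarith
  have hAB : insert i S₀ ≠ S₀ := by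
    intro h; exact hiS₀ (h ▸ Finset.mem_insert_self i S₀)
  have hsum : ∑ l, q l = (S₀.card : ℝ) + q i := by
    have : ∀ l, q l = (if l ∈ S₀ then (1:ℝ) else 0) + (if l = i then q i else 0) := by
      intro l
      by_cases hl : l = i
      · subst hl; simp [hiS₀]
      · rcases hint l hl with h | h <;> simp [hS₀, h, hl]
    rw [Finset.sum_congr rfl fun l _ => this l, Finset.sum_add_distrib,
      Finset.sum_ite_mem, Finset.univ_inter, Finset.sum_const, nsmul_eq_mul, mul_one,
      Finset.sum_ite_eq' Finset.univ i (fun _ => q i)]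
    simp
  refine ⟨fun S => (if S = insert i S₀ then q i else 0) + (if S = S₀ then 1 - q i else 0),
    fun S => add_nonneg (by split_ifs <;> linarith [h0 i]) (by split_ifs <;> linarith [h0 i]), ?_, ?_, ?_⟩
  · rw [Finset.sum_add_distrib]
    simp [Finset.sum_ite_eq']
  · intro j
    rw [two_point_marginal]
    by_cases hj : j = i
    · subst hj; simp [hiS₀]
    · rcases hint j hj with h | h
      · have hj0 : j ∉ S₀ := by simp [hS₀, h]
        simp [hj0, Finset.mem_insert, hj, h]
      · have hj0 : j ∈ S₀ := by simp [hS₀, h]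
        simp [hj0, Finset.mem_insert, h]
  · intro S hS
    have hcard : S = insert i S₀ ∧ 0 < q i ∨ S = S₀ := by
      by_cases h1 : S = insert i S₀
      · by_cases h2 : (0:ℝ) < q i
        · exact Or.inl ⟨h1, h2⟩
        · exact absurd (by
            have h0' : q i = 0 := le_antisymm (not_lt.mp h2) (h0 i)
            simp [h1, hAB, h0'] : (if S = insert i S₀ then q i else 0) +
              (if S = S₀ then 1 - q i else 0) = 0) hS
      · right
        by_contra h2
        simp [h1, h2] at hS
    rw [hsum]
    rcases hcard with ⟨h1, h2⟩ | h1
    · subst h1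
      rw [Finset.card_insert_of_notMem hiS₀]
      push_cast
      constructor <;> linarith
    · subst h1
      constructor <;> [linarith [h0 i]; linarith]

lemma sum_update_update (n : ℕ) (q : Fin n → ℝ) (i j : Fin n) (hij : i ≠ j) (a b : ℝ) :
    ∑ l, Function.update (Function.update q i a) j b l = ∑ l, q l + (a - q i) + (b - q j) := by
  have hpt : ∀ l, Function.update (Function.update q i a) j b l
      = q l + ((if l = i then a - q i else 0) + (if l = j then b - q j else 0)) := by
    intro l
    by_cases hli : l = i
    · subst hli
      rw [Function.update_of_ne hij, Function.update_self]
      simp [hij]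
    by_cases hlj : l = j
    · subst hlj
      rw [Function.update_self]
      simp [hli]
    · rw [Function.update_of_ne hlj, Function.update_of_ne hli]
      simp [hli, hlj]
  rw [Finset.sum_congr rfl fun l _ => hpt l, Finset.sum_add_distrib, Finset.sum_add_distrib,
    Finset.sum_ite_eq' Finset.univ i (fun _ => a - q i),
    Finset.sum_ite_eq' Finset.univ j (fun _ => b - q j)]
  simp
  ring

lemma decomp_aux (n : ℕ) : ∀ (m : ℕ) (q : Fin n → ℝ), (∀ l, 0 ≤ q l) → (∀ l, q l ≤ 1) →
    (Finset.univ.filter (fun l => q l ≠ 0 ∧ q l ≠ 1)).card ≤ m → ∃ D, GoodD n q D := by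
  intro m
  induction m with
  | zero =>
    intro q h0 h1 hc
    apply base_integral
    intro j
    by_contra h
    push_neg at h
    have hj : j ∈ Finset.univ.filter (fun l => q l ≠ 0 ∧ q l ≠ 1) := by
      simp [h.1, h.2]
    have := Finset.card_pos.mpr ⟨j, hj⟩
    omega
  | succ m IH =>
    intro q h0 h1 hc
    by_cases hpair : ∃ i j : Fin n, i ≠ j ∧ (q i ≠ 0 ∧ q i ≠ 1) ∧ (q j ≠ 0 ∧ q j ≠ 1)
    · obtain ⟨i, j, hij, hqi, hqj⟩ := hpair
      have hi0 : 0 < q i := lt_of_le_of_ne (h0 i) (Ne.symm hqi.1)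
      have hi1 : q i < 1 := lt_of_le_of_ne (h1 i) hqi.2
      have hj0 : 0 < q j := lt_of_le_of_ne (h0 j) (Ne.symm hqj.1)
      have hj1 : q j < 1 := lt_of_le_of_ne (h1 j) hqj.2
      set δ1 : ℝ := min (1 - q i) (q j) with hδ1def
      set δ2 : ℝ := min (q i) (1 - q j) with hδ2def
      have hδ1 : 0 < δ1 := lt_min (by linarith) hj0
      have hδ2 : 0 < δ2 := lt_min hi0 (by linarith)
      set q1 : Fin n → ℝ :=
        Function.update (Function.update q i (q i + δ1)) j (q j - δ1) with hq1def
      set q2 : Fin n → ℝ :=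
        Function.update (Function.update q i (q i - δ2)) j (q j + δ2) with hq2def
      have hq1i : q1 i = q i + δ1 := by
        rw [hq1def, Function.update_of_ne hij, Function.update_self]
      have hq1j : q1 j = q j - δ1 := by rw [hq1def, Function.update_self]
      have hq1l : ∀ l, l ≠ i → l ≠ j → q1 l = q l := fun l hli hlj => by
        rw [hq1def, Function.update_of_ne hlj, Function.update_of_ne hli]
      have hq2i : q2 i = q i - δ2 := by
        rw [hq2def, Function.update_of_ne hij, Function.update_self]
      have hq2j : q2 j = q j + δ2 := by rw [hq2def, Function.update_self]
      have hq2l : ∀ l, l ≠ i → l ≠ j → q2 l = q l := fun l hli hlj => by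
        rw [hq2def, Function.update_of_ne hlj, Function.update_of_ne hli]
      -- bounds for q1 and q2
      have h10 : ∀ l, 0 ≤ q1 l := by
        intro l
        by_cases hli : l = i
        · rw [hli, hq1i]; linarith
        by_cases hlj : l = j
        · rw [hlj, hq1j]
          have := min_le_right (1 - q i) (q j); linarith
        · rw [hq1l l hli hlj]; exact h0 l
      have h11 : ∀ l, q1 l ≤ 1 := by
        intro l
        by_cases hli : l = i
        · rw [hli, hq1i]
          have := min_le_left (1 - q i) (q j); linarith
        by_cases hlj : l = j
        · rw [hlj, hq1j]; linarith [h1 j]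
        · rw [hq1l l hli hlj]; exact h1 l
      have h20 : ∀ l, 0 ≤ q2 l := by
        intro l
        by_cases hli : l = i
        · rw [hli, hq2i]
          have := min_le_left (q i) (1 - q j); linarith
        by_cases hlj : l = j
        · rw [hlj, hq2j]; linarith
        · rw [hq2l l hli hlj]; exact h0 l
      have h21 : ∀ l, q2 l ≤ 1 := by
        intro l
        by_cases hli : l = i
        · rw [hli, hq2i]; linarith [h1 i]
        by_cases hlj : l = j
        · rw [hlj, hq2j]
          have := min_le_right (q i) (1 - q j); linarith
        · rw [hq2l l hli hlj]; exact h1 l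
      -- fractional support shrinks
      have hsub : ∀ (p : Fin n → ℝ), (∀ l, l ≠ i → l ≠ j → p l = q l) →
          Finset.univ.filter (fun l => p l ≠ 0 ∧ p l ≠ 1) ⊆
          Finset.univ.filter (fun l => q l ≠ 0 ∧ q l ≠ 1) := by
        intro p hp l hl
        simp only [Finset.mem_filter, Finset.mem_univ, true_and] at hl ⊢
        by_cases hli : l = i
        · subst hli; exact hqi
        by_cases hlj : l = j
        · subst hlj; exact hqj
        · rw [← hp l hli hlj]; exact hl
      have hcard : ∀ (p : Fin n → ℝ), (∀ l, l ≠ i → l ≠ j → p l = q l) →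
          (∃ l₀, (q l₀ ≠ 0 ∧ q l₀ ≠ 1) ∧ (p l₀ = 0 ∨ p l₀ = 1)) →
          (Finset.univ.filter (fun l => p l ≠ 0 ∧ p l ≠ 1)).card ≤ m := by
        intro p hp ⟨l₀, hl₀q, hl₀p⟩
        have hlt : Finset.univ.filter (fun l => p l ≠ 0 ∧ p l ≠ 1) ⊂
            Finset.univ.filter (fun l => q l ≠ 0 ∧ q l ≠ 1) := by
          rw [Finset.ssubset_iff_of_subset (hsub p hp)]
          refine ⟨l₀, by simp [hl₀q.1, hl₀q.2], ?_⟩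
          simp only [Finset.mem_filter, Finset.mem_univ, true_and, not_and_or, not_not]
          rcases hl₀p with h | h
          · exact Or.inl h
          · exact Or.inr h
        have := Finset.card_lt_card hlt
        omega
      have hc1 : (Finset.univ.filter (fun l => q1 l ≠ 0 ∧ q1 l ≠ 1)).card ≤ m := by
        apply hcard q1 hq1l
        rcases min_cases (1 - q i) (q j) with ⟨he, _⟩ | ⟨he, _⟩
        · exact ⟨i, hqi, Or.inr (by rw [hq1i, hδ1def.trans he]; ring)⟩
        · exact ⟨j, hqj, Or.inl (by rw [hq1j, hδ1def.trans he]; ring)⟩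
      have hc2 : (Finset.univ.filter (fun l => q2 l ≠ 0 ∧ q2 l ≠ 1)).card ≤ m := by
        apply hcard q2 hq2l
        rcases min_cases (q i) (1 - q j) with ⟨he, _⟩ | ⟨he, _⟩
        · exact ⟨i, hqi, Or.inl (by rw [hq2i, hδ2def.trans he]; ring)⟩
        · exact ⟨j, hqj, Or.inr (by rw [hq2j, hδ2def.trans he]; ring)⟩
      obtain ⟨D1, hD1n, hD1s, hD1m, hD1b⟩ := IH q1 h10 h11 hc1
      obtain ⟨D2, hD2n, hD2s, hD2m, hD2b⟩ := IH q2 h20 h21 hc2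
      set lam : ℝ := δ2 / (δ1 + δ2) with hlamdef
      have hden : (0:ℝ) < δ1 + δ2 := by linarith
      have hlam0 : 0 ≤ lam := le_of_lt (div_pos hδ2 hden)
      have hlam1 : lam ≤ 1 := by
        rw [hlamdef, div_le_one hden]; linarith
      have hmix : ∀ l, lam * q1 l + (1 - lam) * q2 l = q l := by
        intro l
        by_cases hli : l = i
        · subst hli; rw [hq1i, hq2i, hlamdef]
          field_simp
          ring
        by_cases hlj : l = j
        · subst hlj; rw [hq1j, hq2j, hlamdef]
          field_simp
          ring
        · rw [hq1l l hli hlj, hq2l l hli hlj]; ring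
      have hsum1 : ∑ l, q1 l = ∑ l, q l := by
        rw [hq1def, sum_update_update n q i j hij]; ring
      have hsum2 : ∑ l, q2 l = ∑ l, q l := by
        rw [hq2def, sum_update_update n q i j hij]; ring
      refine ⟨fun S => lam * D1 S + (1 - lam) * D2 S, ?_, ?_, ?_, ?_⟩
      · intro S
        have := hD1n S; have := hD2n S
        have h1l : (0:ℝ) ≤ 1 - lam := by linarith
        positivity
      · rw [Finset.sum_add_distrib, ← Finset.mul_sum, ← Finset.mul_sum, hD1s, hD2s]; ring
      · intro l
        rw [Finset.sum_add_distrib, ← Finset.mul_sum, ← Finset.mul_sum, hD1m, hD2m]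
        exact hmix l
      · intro S hS
        have : D1 S ≠ 0 ∨ D2 S ≠ 0 := by
          by_contra h
          push_neg at h
          have hz : lam * D1 S + (1 - lam) * D2 S = 0 := by rw [h.1, h.2]; ring
          exact hS hz
        rcases this with h | h
        · have := hD1b S h; rw [hsum1] at this; exact this
        · have := hD2b S h; rw [hsum2] at this; exact this
    · push_neg at hpair
      by_cases hex : ∃ i, q i ≠ 0 ∧ q i ≠ 1
      · obtain ⟨i, hi⟩ := hex
        apply base_one_frac n q h0 i (lt_of_le_of_ne (h1 i) hi.2)
        intro l hl
        by_contra h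
        push_neg at h
        exact h.2 (hpair i l (Ne.symm hl) hi h.1)
      · push_neg at hex
        apply base_integral
        intro l
        by_cases h : q l = 0
        · exact Or.inl h
        · exact Or.inr (hex l h)

/-- Among all distributions on `2^N` with given marginals `q`, the maximum
expectation of `S ↦ min(|S|, k)` equals `min(Σ_i q_i, k)`. -/
theorem max_correlated_expectation_k_uniform (n k : ℕ) (hk : 1 ≤ k)
    (q : Fin n → ℝ) (hq0 : ∀ i, 0 ≤ q i) (hq1 : ∀ i, q i ≤ 1) :
    IsGreatest
      {x : ℝ | ∃ D : Finset (Fin n) → ℝ,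
        (∀ S, 0 ≤ D S) ∧ (∑ S : Finset (Fin n), D S = 1) ∧
        (∀ i, (∑ S ∈ Finset.univ.filter (fun S : Finset (Fin n) => i ∈ S), D S) = q i) ∧
        x = ∑ S : Finset (Fin n), D S * (min S.card k : ℕ)}
      (min (∑ i, q i) (k : ℝ)) := by
  constructor
  · obtain ⟨D, hDn, hDs, hDm, hDb⟩ :=
      decomp_aux n (Finset.univ.filter (fun l => q l ≠ 0 ∧ q l ≠ 1)).card q hq0 hq1 le_rfl
    refine ⟨D, hDn, hDs, hDm, ?_⟩
    by_cases hle : (∑ i, q i) ≤ (k : ℝ)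
    · rw [min_eq_left hle, ← double_count n q D hDm]
      refine Finset.sum_congr rfl fun S _ => ?_
      by_cases hS : D S = 0
      · simp [hS]
      · have hb := (hDb S hS).1
        have h1 : (S.card : ℝ) < (k : ℝ) + 1 := by linarith
        have h2 : S.card < k + 1 := by exact_mod_cast h1
        rw [min_eq_left (by omega : S.card ≤ k)]
    · push_neg at hle
      rw [min_eq_right hle.le]
      have heq : ∑ S : Finset (Fin n), D S * ((min S.card k : ℕ) : ℝ)
          = ∑ S : Finset (Fin n), D S * (k : ℝ) := by
        refine Finset.sum_congr rfl fun S _ => ?_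
        by_cases hS : D S = 0
        · simp [hS]
        · have hb := (hDb S hS).2
          have h1 : (k : ℝ) < (S.card : ℝ) + 1 := lt_trans hle hb
          have h2 : k < S.card + 1 := by exact_mod_cast h1
          rw [min_eq_right (by omega : k ≤ S.card)]
      rw [heq, ← Finset.sum_mul, hDs, one_mul]
  · rintro x ⟨D, hDn, hDs, hDm, rfl⟩
    apply le_min
    · calc ∑ S : Finset (Fin n), D S * ((min S.card k : ℕ) : ℝ)
          ≤ ∑ S : Finset (Fin n), D S * S.card :=
            Finset.sum_le_sum fun S _ => mul_le_mul_of_nonneg_left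
              (Nat.cast_le.mpr (min_le_left _ _)) (hDn S)
        _ = ∑ i, q i := double_count n q D hDm
    · calc ∑ S : Finset (Fin n), D S * ((min S.card k : ℕ) : ℝ)
          ≤ ∑ S : Finset (Fin n), D S * (k : ℝ) :=
            Finset.sum_le_sum fun S _ => mul_le_mul_of_nonneg_left
              (Nat.cast_le.mpr (min_le_right _ _)) (hDn S)
        _ = (k : ℝ) := by rw [← Finset.sum_mul, hDs, one_mul]
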